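/- Let m ≥ 1, g ≥ 1, let A be an m × m matrix over ℚ, and work in the exterior algebra over ℚ on the 2mg generators ζ_i^k for 1 ≤ i ≤ m and 1 ≤ k ≤ 2g. Set ω = Σ_{k=1}^{g} Σ_{i,j=1}^{m} A_{ij}·ζ_i^k ∧ ζ_j^{k+g}. Then ω^{mg}/(mg)! = (−1)^{g·m(m−1)/2}·(det A)^g · Π_{k=1}^{g} (ζ₁^k ∧ ⋯ ∧ ζ_m^k ∧ ζ₁^{k+g} ∧ ⋯ ∧ ζ_m^{k+g}). -/

import Mathlib

section Auxiliary

variable {R : Type*} [Ring R]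

/-- Moving an element that anticommutes with every member of a list past the list product. -/
lemma mul_list_prod_anticomm (w : R) : ∀ (l : List R), (∀ x ∈ l, w * x = -(x * w)) →
    w * l.prod = (-1 : ℤ) ^ l.length • (l.prod * w)
  | [], _ => by simp
  | a :: t, h => by
    have ha := h a (List.mem_cons_self)
    have ht := mul_list_prod_anticomm w t fun x hx => h x (List.mem_cons_of_mem a hx)
    simp only [List.prod_cons, List.length_cons]
    rw [← mul_assoc, ha, neg_mul, mul_assoc, ht, mul_smul_comm, pow_succ, ← neg_smul]
    rw [mul_neg_one, mul_assoc]

/-- Powers of a sum of pairwise commuting square-zero elements. -/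
lemma sq_zero_sum_pow : ∀ (l : List R), (∀ x ∈ l, ∀ y ∈ l, Commute x y) →
    (∀ x ∈ l, x * x = 0) →
    l.sum ^ l.length = l.length.factorial • l.prod ∧ l.sum ^ (l.length + 1) = 0
  | [], _, _ => by simp
  | a :: t, hc, hs => by
    obtain ⟨ih1, ih2⟩ := sq_zero_sum_pow t
      (fun x hx y hy => hc x (List.mem_cons_of_mem a hx) y (List.mem_cons_of_mem a hy))
      (fun x hx => hs x (List.mem_cons_of_mem a hx))
    have ha2 : a * a = 0 := hs a (List.mem_cons_self)
    have hC : Commute a t.sum := Commute.list_sum_right _ _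
      (fun y hy => hc a (List.mem_cons_self) y (List.mem_cons_of_mem a hy))
    have hterm : ∀ j : ℕ, a ^ (j + 2) = 0 := by
      intro j
      rw [pow_add, pow_two, ha2, mul_zero]
    simp only [List.sum_cons, List.length_cons, List.prod_cons]
    constructor
    · rw [hC.add_pow]
      rw [Finset.sum_range_succ', Finset.sum_range_succ']
      have hz : ∀ j ∈ Finset.range t.length,
          a ^ (j + 1 + 1) * t.sum ^ (t.length + 1 - (j + 1 + 1)) *
            ((t.length + 1).choose (j + 1 + 1) : R) = 0 := by
        intro j _
        rw [hterm j, zero_mul, zero_mul]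
      rw [Finset.sum_eq_zero hz, zero_add]
      simp only [pow_zero, pow_one, one_mul, Nat.choose_zero_right, Nat.cast_one, mul_one,
        Nat.add_sub_cancel, Nat.choose_one_right, Nat.sub_zero]
      rw [ih2, zero_add, ih1, Nat.factorial_succ]
      simp only [pow_one, Nat.choose_one_right, smul_mul_assoc, mul_smul_comm, nsmul_eq_mul,
        Nat.cast_mul]
      rw [add_zero,
        show a * ((t.length.factorial : R) * t.prod) = (t.length.factorial : R) * (a * t.prod) by
          rw [← mul_assoc, ← (Nat.cast_commute t.length.factorial a).eq, mul_assoc],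
        mul_assoc, ← (Nat.cast_commute (t.length + 1) (a * t.prod)).eq,
        ← mul_assoc, ← Nat.cast_mul, Nat.mul_comm, Nat.cast_mul, mul_assoc]
    · rw [hC.add_pow]
      refine Finset.sum_eq_zero fun j hj => ?_
      rcases j with _ | _ | j
      · rw [pow_zero, one_mul]
        have : t.sum ^ (t.length + 1 + 1 - 0) = t.sum ^ (t.length + 1) * t.sum := by
          rw [Nat.sub_zero, pow_succ]
        rw [this, ih2, zero_mul, zero_mul]
      · have : t.sum ^ (t.length + 1 + 1 - 1) = t.sum ^ (t.length + 1) := by norm_num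
        rw [pow_one, this, ih2, mul_zero, zero_mul]
      · rw [hterm j, zero_mul, zero_mul]

/-- Powers of a sum of pairwise commuting elements each of which is `(m+1)`-nilpotent. -/
lemma nilpotent_sum_pow (m : ℕ) : ∀ (l : List R), (∀ x ∈ l, ∀ y ∈ l, Commute x y) →
    (∀ x ∈ l, x ^ (m + 1) = 0) →
    ∃ c : ℕ, c * m.factorial ^ l.length = (m * l.length).factorial ∧
      l.sum ^ (m * l.length) = c • (l.map (· ^ m)).prod ∧
      l.sum ^ (m * l.length + 1) = 0
  | [], _, _ => ⟨1, by simp, by simp, by simp⟩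
  | a :: t, hc, hn => by
    obtain ⟨c, hcf, ih1, ih2⟩ := nilpotent_sum_pow m t
      (fun x hx y hy => hc x (List.mem_cons_of_mem a hx) y (List.mem_cons_of_mem a hy))
      (fun x hx => hn x (List.mem_cons_of_mem a hx))
    have han : a ^ (m + 1) = 0 := hn a (List.mem_cons_self)
    have hC : Commute a t.sum := Commute.list_sum_right _ _
      (fun y hy => hc a (List.mem_cons_self) y (List.mem_cons_of_mem a hy))
    set n := t.length with hn'
    have hagt : ∀ j : ℕ, m + 1 ≤ j → a ^ j = 0 := by
      intro j hj
      rw [show j = (m + 1) + (j - (m + 1)) by omega, pow_add, han, zero_mul]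
    have hsgt : ∀ e : ℕ, m * n + 1 ≤ e → t.sum ^ e = 0 := by
      intro e he
      rw [show e = (m * n + 1) + (e - (m * n + 1)) by omega, pow_add, ih2, zero_mul]
    refine ⟨(m * (n + 1)).choose m * c, ?_, ?_, ?_⟩
    · simp only [List.length_cons, ← hn']
      have hle : m ≤ m * (n + 1) := Nat.le_mul_of_pos_right m (Nat.succ_pos n)
      have key := Nat.choose_mul_factorial_mul_factorial hle
      rw [show m * (n + 1) - m = m * n by ring_nf; omega] at key
      calc (m * (n + 1)).choose m * c * m.factorial ^ (n + 1)
          = (m * (n + 1)).choose m * m.factorial * (c * m.factorial ^ n) := by ring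
        _ = (m * (n + 1)).choose m * m.factorial * (m * n).factorial := by rw [hcf]
        _ = (m * (n + 1)).factorial := key
    · simp only [List.sum_cons, List.length_cons, List.map_cons, List.prod_cons, ← hn']
      rw [hC.add_pow]
      rw [Finset.sum_eq_single_of_mem m
        (Finset.mem_range.2 (by have : m ≤ m * (n+1) := Nat.le_mul_of_pos_right m (Nat.succ_pos n); omega))]
      · rw [show m * (n + 1) - m = m * n by ring_nf; omega, ih1]
        rw [mul_smul_comm, smul_mul_assoc, nsmul_eq_mul, nsmul_eq_mul, Nat.cast_mul]
        rw [← (Nat.cast_commute ((m * (n+1)).choose m) (a ^ m * (t.map (· ^ m)).prod)).eq,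
          ← mul_assoc, ← Nat.cast_mul, Nat.mul_comm c, Nat.cast_mul, mul_assoc]
      · intro j hj hjm
        rcases Nat.lt_or_ge j m with h | h
        · have hmn : m * (n + 1) = m * n + m := by ring
          rw [hsgt (m * (n + 1) - j) (by omega), mul_zero, zero_mul]
        · rw [hagt j (by omega), zero_mul, zero_mul]
    · simp only [List.sum_cons, List.length_cons, ← hn']
      rw [hC.add_pow]
      refine Finset.sum_eq_zero fun j hj => ?_
      rcases Nat.lt_or_ge j (m + 1) with h | h
      · have hmn : m * (n + 1) = m * n + m := by ring
        rw [hsgt (m * (n + 1) + 1 - j) (by omega), mul_zero, zero_mul]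
      · rw [hagt j h, zero_mul, zero_mul]

open ExteriorAlgebra in
/-- The alternating-multilinear expansion of a wedge of rows of a matrix. -/
lemma iMulti_rows_eq_det_smul {M : Type*} [AddCommGroup M] [Module ℚ M] (n : ℕ)
    (B : Matrix (Fin n) (Fin n) ℚ) (v : Fin n → M) :
    ExteriorAlgebra.ιMulti ℚ n (fun i => ∑ j, B i j • v j)
      = B.det • ExteriorAlgebra.ιMulti ℚ n v := by
  classical
  calc (ιMulti ℚ n : AlternatingMap ℚ M (ExteriorAlgebra ℚ M) (Fin n))
        (fun i => ∑ j, B i j • v j)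
      = ∑ r : Fin n → Fin n, (∏ i, B i (r i)) • ιMulti ℚ n (v ∘ r) := by
        have h := MultilinearMap.map_sum (ιMulti ℚ (M := M) n).toMultilinearMap
          (g := fun i j => B i j • v j)
        exact h.trans (Finset.sum_congr rfl fun r _ =>
          (ιMulti ℚ n).toMultilinearMap.map_smul_univ (fun i => B i (r i)) (v ∘ r))
    _ = ∑ r ∈ Finset.univ.filter (fun r : Fin n → Fin n => Function.Bijective r),
          (∏ i, B i (r i)) • ιMulti ℚ n (v ∘ r) := by
        refine (Finset.sum_subset (Finset.filter_subset _ _) fun r _ hr => ?_).symm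
        have hrb : ¬ Function.Bijective r := by simpa using hr
        have hri : ¬ Function.Injective r := fun h => hrb ((Finite.injective_iff_bijective).1 h)
        have : ¬ Function.Injective (v ∘ r) := by
          obtain ⟨x, y, hxy, hne⟩ := Function.not_injective_iff.1 hri
          exact Function.not_injective_iff.2 ⟨x, y, by simp [Function.comp, hxy], hne⟩
        rw [AlternatingMap.map_eq_zero_of_not_injective _ _ this, smul_zero]
    _ = ∑ σ : Equiv.Perm (Fin n), (∏ i, B i (σ i)) • ιMulti ℚ n (v ∘ σ) := by
        refine Finset.sum_bij (fun p h => Equiv.ofBijective p (Finset.mem_filter.1 h).2)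
          (fun _ _ => Finset.mem_univ _) (fun _ _ _ _ h => by injection h)
          (fun σ _ => ⟨σ, Finset.mem_filter.2 ⟨Finset.mem_univ _, σ.bijective⟩,
            Equiv.coe_fn_injective rfl⟩) (fun p hp => rfl)
    _ = ∑ σ : Equiv.Perm (Fin n),
          (((Equiv.Perm.sign σ : ℤ) : ℚ) * ∏ i, B i (σ i)) • ιMulti ℚ n v := by
        refine Finset.sum_congr rfl fun σ _ => ?_
        rw [AlternatingMap.map_perm, Units.smul_def, ← Int.cast_smul_eq_zsmul ℚ,
          smul_smul, mul_comm]
    _ = B.det • ιMulti ℚ n v := by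
        rw [← Finset.sum_smul, ← Matrix.det_transpose B, Matrix.det_apply']
        congr 1

open ExteriorAlgebra in
lemma prod_pairs_reorder {M : Type*} [AddCommGroup M] [Module ℚ M] :
    ∀ (l : List (M × M)),
    (l.map (fun p => ι ℚ p.1 * ι ℚ p.2)).prod
      = (-1 : ℤ) ^ (l.length.choose 2) •
        ((l.map (fun p => ι ℚ p.1)).prod * (l.map (fun p => ι ℚ p.2)).prod)
  | [] => by simp
  | a :: t => by
    have ih := prod_pairs_reorder t
    have hanti : ∀ x y : M, ι ℚ x * ι ℚ y = -(ι ℚ y * ι ℚ x) := fun x y =>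
      eq_neg_of_add_eq_zero_left (ι_add_mul_swap x y)
    have hmove : ι ℚ a.2 * (t.map (fun p => ι ℚ p.1)).prod
        = (-1 : ℤ) ^ t.length • ((t.map (fun p => ι ℚ p.1)).prod * ι ℚ a.2) := by
      have h := mul_list_prod_anticomm (ι ℚ a.2) (t.map (fun p => ι ℚ p.1)) ?_
      · simpa using h
      · intro x hx
        obtain ⟨p, hp, rfl⟩ := List.mem_map.1 hx
        exact hanti _ _
    simp only [List.map_cons, List.prod_cons, List.length_cons, ih]
    rw [mul_smul_comm, mul_assoc (ι ℚ a.1), ← mul_assoc (ι ℚ a.2), hmove]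
    simp only [smul_mul_assoc, mul_smul_comm, smul_smul, Nat.choose_succ_succ,
      Nat.choose_one_right, pow_add, mul_assoc]
    rw [mul_comm ((-1 : ℤ) ^ t.length.choose 2)]

lemma prod_map_const_smul {ι : Type*} {S : Type*} [Ring S] [Algebra ℚ S] (q : ℚ) (f : ι → S) :
    ∀ l : List ι, (l.map (fun i => q • f i)).prod = q ^ l.length • (l.map f).prod
  | [] => by simp
  | a :: t => by
    simp only [List.map_cons, List.prod_cons, prod_map_const_smul q f t, List.length_cons]
    rw [smul_mul_assoc, mul_smul_comm, smul_smul, pow_succ, mul_comm]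

end Auxiliary

/-- The generator `ζᵢᵏ` of the exterior algebra over `ℚ` on `2mg` generators: indices
`i : Fin m` and `k : Fin g ⊕ Fin g`, where `Sum.inl k` plays the role of `ζᵢᵏ` for
`1 ≤ k ≤ g` and `Sum.inr k` that of `ζᵢ^{k+g}`. -/
noncomputable def zeta (m g : ℕ) (i : Fin m) (k : Fin g ⊕ Fin g) :
    ExteriorAlgebra ℚ ((Fin m × (Fin g ⊕ Fin g)) → ℚ) :=
  ExteriorAlgebra.ι ℚ (Pi.single (i, k) (1 : ℚ))

open ExteriorAlgebra

set_option maxHeartbeats 1000000 in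
/-- With `ω = Σ_{k=1}^{g} Σ_{i,j} Aᵢⱼ ζᵢᵏ ∧ ζⱼ^{k+g}` in the exterior
algebra over `ℚ` on the `2mg` generators `ζᵢᵏ`, one has
`ω^{mg} = (mg)! * (-1)^{g·m(m-1)/2} * (det A)^g * Π_k (ζ₁ᵏ∧⋯∧ζₘᵏ∧ζ₁^{k+g}∧⋯∧ζₘ^{k+g})`. -/
theorem fermionic_gaussian_torus (m g : ℕ) (hm : 1 ≤ m) (hg : 1 ≤ g)
    (A : Matrix (Fin m) (Fin m) ℚ) :
    (∑ k : Fin g, ∑ i : Fin m, ∑ j : Fin m,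
        A i j • (zeta m g i (Sum.inl k) * zeta m g j (Sum.inr k))) ^ (m * g) =
      ((m * g).factorial : ℚ) •
        (((-1 : ℚ) ^ (g * (m * (m - 1) / 2)) * A.det ^ g) •
          ((List.finRange g).map (fun k =>
            ((List.finRange m).map (fun i => zeta m g i (Sum.inl k))).prod *
              ((List.finRange m).map (fun i => zeta m g i (Sum.inr k))).prod)).prod) := by
  classical
  set M := (Fin m × (Fin g ⊕ Fin g)) → ℚ with hM
  have hanti : ∀ x y : M, ι ℚ x * ι ℚ y = -(ι ℚ y * ι ℚ x) := fun x y =>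
    eq_neg_of_add_eq_zero_left (ι_add_mul_swap x y)
  have hcentral : ∀ c d x : M, (ι ℚ c * ι ℚ d) * ι ℚ x = ι ℚ x * (ι ℚ c * ι ℚ d) := by
    intro c d x
    rw [mul_assoc, hanti d x, mul_neg, ← mul_assoc, hanti c x, neg_mul, neg_neg, mul_assoc]
  have hpaircomm : ∀ a b c d : M, Commute (ι ℚ a * ι ℚ b) (ι ℚ c * ι ℚ d) := by
    intro a b c d
    show _ = _
    rw [mul_assoc (ι ℚ a), ← hcentral c d b, ← mul_assoc, ← hcentral c d a, mul_assoc]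
  have hpairsq : ∀ u v : M, (ι ℚ u * ι ℚ v) * (ι ℚ u * ι ℚ v) = 0 := by
    intro u v
    rw [mul_assoc (ι ℚ u), ← mul_assoc (ι ℚ v), hanti v u, neg_mul, mul_neg,
      ← mul_assoc (ι ℚ u), ← mul_assoc (ι ℚ u) (ι ℚ u), ι_sq_zero, zero_mul, zero_mul, neg_zero]
  set e : Fin m → (Fin g ⊕ Fin g) → M := fun i k => Pi.single (i, k) (1 : ℚ) with he
  set w : Fin g → Fin m → M := fun k i => ∑ j, A i j • e j (Sum.inr k) with hw
  set η : Fin g → Fin m → ExteriorAlgebra ℚ M :=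
    fun k i => ι ℚ (e i (Sum.inl k)) * ι ℚ (w k i) with hη
  set Ω : Fin g → ExteriorAlgebra ℚ M := fun k => ∑ i, η k i with hΩ
  have hζ : ∀ i k, zeta m g i k = ι ℚ (e i k) := fun i k => rfl
  have hΩeq : ∀ k, (∑ i : Fin m, ∑ j : Fin m,
      A i j • (zeta m g i (Sum.inl k) * zeta m g j (Sum.inr k))) = Ω k := by
    intro k
    simp only [hΩ]
    refine Finset.sum_congr rfl fun i _ => ?_
    simp only [hζ, hη, hw, map_sum, map_smul, Finset.mul_sum, mul_smul_comm]
  set P1 : Fin g → ExteriorAlgebra ℚ M :=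
    fun k => ((List.finRange m).map (fun i => zeta m g i (Sum.inl k))).prod with hP1
  set P2 : Fin g → ExteriorAlgebra ℚ M :=
    fun k => ((List.finRange m).map (fun i => zeta m g i (Sum.inr k))).prod with hP2
  set q : ℚ := (m.factorial : ℚ) * ((-1 : ℚ) ^ (m.choose 2) * A.det) with hq
  have hfin : ∀ k, Ω k ^ m = q • (P1 k * P2 k) ∧ Ω k ^ (m + 1) = 0 := by
    intro k
    set L : List (ExteriorAlgebra ℚ M) := (List.finRange m).map (η k) with hL
    have hlen : L.length = m := by simp [hL]
    have hsum : L.sum = Ω k := by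
      rw [hL, ← Fin.sum_univ_def]
    have hcomm : ∀ x ∈ L, ∀ y ∈ L, Commute x y := by
      intro x hx y hy
      obtain ⟨i, _, rfl⟩ := List.mem_map.1 hx
      obtain ⟨j, _, rfl⟩ := List.mem_map.1 hy
      exact hpaircomm _ _ _ _
    have hsq : ∀ x ∈ L, x * x = 0 := by
      intro x hx
      obtain ⟨i, _, rfl⟩ := List.mem_map.1 hx
      exact hpairsq _ _
    obtain ⟨h1, h2⟩ := sq_zero_sum_pow L hcomm hsq
    rw [hsum, hlen] at h1 h2
    refine ⟨?_, h2⟩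
    have hLpairs : L = ((List.finRange m).map
        (fun i => (e i (Sum.inl k), w k i))).map (fun p => ι ℚ p.1 * ι ℚ p.2) := by
      rw [List.map_map]; rfl
    have hre := prod_pairs_reorder ((List.finRange m).map (fun i => (e i (Sum.inl k), w k i)))
    rw [← hLpairs] at hre
    have hlen2 : ((List.finRange m).map (fun i => (e i (Sum.inl k), w k i))).length = m := by
      simp
    rw [hlen2] at hre
    have hfst : ((List.finRange m).map (fun i => (e i (Sum.inl k), w k i))).map
        (fun p => ι ℚ p.1) = (List.finRange m).map (fun i => zeta m g i (Sum.inl k)) := by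
      rw [List.map_map]; rfl
    have hsnd : ((List.finRange m).map (fun i => (e i (Sum.inl k), w k i))).map
        (fun p => ι ℚ p.2) = (List.finRange m).map (fun i => ι ℚ (w k i)) := by
      rw [List.map_map]; rfl
    rw [hfst, hsnd] at hre
    have hdet : ((List.finRange m).map (fun i => ι ℚ (w k i))).prod
        = A.det • ((List.finRange m).map (fun i => zeta m g i (Sum.inr k))).prod := by
      have h3 := iMulti_rows_eq_det_smul m A (fun j => e j (Sum.inr k))
      rw [ιMulti_apply, ιMulti_apply, List.ofFn_eq_map, List.ofFn_eq_map] at h3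
      exact h3
    rw [hdet] at hre
    rw [h1, hre]
    simp only [hP1, hP2]
    rw [mul_smul_comm, ← Nat.cast_smul_eq_nsmul ℚ, ← Int.cast_smul_eq_zsmul ℚ,
      smul_smul, smul_smul]
    congr 1
    rw [hq]
    push_cast
    ring
  set LΩ : List (ExteriorAlgebra ℚ M) := (List.finRange g).map Ω with hLΩ
  have hlenΩ : LΩ.length = g := by simp [hLΩ]
  have hcommΩ : ∀ x ∈ LΩ, ∀ y ∈ LΩ, Commute x y := by
    intro x hx y hy
    obtain ⟨k, _, rfl⟩ := List.mem_map.1 hx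
    obtain ⟨l, _, rfl⟩ := List.mem_map.1 hy
    simp only [hΩ]
    exact Commute.sum_left _ _ _ fun i _ =>
      Commute.sum_right _ _ _ fun j _ => hpaircomm _ _ _ _
  have hnil : ∀ x ∈ LΩ, x ^ (m + 1) = 0 := by
    intro x hx
    obtain ⟨k, _, rfl⟩ := List.mem_map.1 hx
    exact (hfin k).2
  obtain ⟨c, hcfac, hpow, -⟩ := nilpotent_sum_pow m LΩ hcommΩ hnil
  rw [hlenΩ] at hcfac hpow
  have hsumΩ : LΩ.sum = ∑ k, Ω k := by rw [hLΩ, ← Fin.sum_univ_def]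
  have hmap : LΩ.map (· ^ m) = (List.finRange g).map (fun k => q • (P1 k * P2 k)) := by
    rw [hLΩ, List.map_map]
    exact List.map_congr_left fun k _ => (hfin k).1
  rw [hmap, prod_map_const_smul, List.length_finRange] at hpow
  have hLHS : (∑ k : Fin g, ∑ i : Fin m, ∑ j : Fin m,
      A i j • (zeta m g i (Sum.inl k) * zeta m g j (Sum.inr k))) = LΩ.sum := by
    rw [hsumΩ]
    exact Finset.sum_congr rfl fun k _ => hΩeq k
  rw [hLHS, hpow]
  have hc2 : m.choose 2 * g = g * (m * (m - 1) / 2) := by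
    rw [Nat.choose_two_right, Nat.mul_comm]
  have hcast : (c : ℚ) * ((m.factorial : ℚ)) ^ g = (((m * g).factorial : ℕ) : ℚ) := by
    exact_mod_cast congrArg (Nat.cast (R := ℚ)) hcfac
  have hs : (c : ℚ) * q ^ g
      = ((m * g).factorial : ℚ) * ((-1 : ℚ) ^ (g * (m * (m - 1) / 2)) * A.det ^ g) := by
    rw [hq, ← hc2, ← hcast]
    ring
  rw [← Nat.cast_smul_eq_nsmul ℚ c, smul_smul, hs, ← smul_smul]
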